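/- arXiv:1903.05824 — 6 statements merged into one kernel-verified Lean document; each statement's English description precedes it below -/
import Mathlib

section
/- For all positive integers n, m, s, if δ = ⌊s^{1/n}·(m+n-1) - n + 1⌋ (assumed nonnegative), then the product (δ+n)(δ+n-1)⋯(δ+1) is strictly greater than s·(m+n-1)(m+n-2)⋯m, i.e., binom(δ+n, n) > binom(m+n-1, n)·s. -/
open Finset

/-- If `δ = ⌊s^{1/n}·(m+n-1) - n + 1⌋` is nonnegative, then
`(δ+n)(δ+n-1)⋯(δ+1) > s·(m+n-1)(m+n-2)⋯m`, i.e.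
`binom(δ+n, n) > binom(m+n-1, n)·s`. -/
theorem stmt_1 (n m s : ℕ) (hn : 0 < n) (hm : 0 < m) (hs : 0 < s)
    (δ : ℕ) (hδ : (δ : ℤ) = ⌊(s : ℝ) ^ ((n : ℝ)⁻¹) * ((m : ℝ) + n - 1) - n + 1⌋) :
    (∏ i ∈ Finset.range n, (δ + n - i)) > s * ∏ i ∈ Finset.range n, (m + n - 1 - i) ∧
    (δ + n).choose n > (m + n - 1).choose n * s := by
  set r : ℝ := (s : ℝ) ^ ((n : ℝ)⁻¹) with hr
  have hs1 : (1:ℝ) ≤ s := by exact_mod_cast hs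
  have hr1 : 1 ≤ r := Real.one_le_rpow hs1 (by positivity)
  have hrn : r ^ n = (s : ℝ) := by
    rw [hr, ← Real.rpow_natCast ((s:ℝ) ^ ((n:ℝ)⁻¹)) n, ← Real.rpow_mul (by positivity),
      inv_mul_cancel₀ (by exact_mod_cast hn.ne' : (n:ℝ) ≠ 0), Real.rpow_one]
  have hx : r * ((m : ℝ) + n - 1) - n + 1 < (δ:ℝ) + 1 := by
    have h := Int.lt_floor_add_one (r * ((m : ℝ) + n - 1) - n + 1)
    rw [← hδ] at h
    exact_mod_cast h
  have hfac : ∀ i ∈ range n, r * ((m:ℝ) + n - 1 - i) < (δ:ℝ) + n - i := by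
    intro i hi
    have h2 : r * ((m:ℝ) + n - 1) < (δ:ℝ) + n := by linarith
    have h3 : (i:ℝ) ≤ r * i := by
      nlinarith [Nat.cast_nonneg (α := ℝ) i]
    nlinarith
  have hpos : ∀ i ∈ range n, (0:ℝ) < r * ((m:ℝ) + n - 1 - i) := by
    intro i hi
    have hi' : (i:ℝ) + 1 ≤ n := by exact_mod_cast Finset.mem_range.mp hi
    have hm' : (1:ℝ) ≤ m := by exact_mod_cast hm
    nlinarith
  have key : (s:ℝ) * ∏ i ∈ range n, ((m:ℝ) + n - 1 - i) < ∏ i ∈ range n, ((δ:ℝ) + n - i) := by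
    have h := Finset.prod_lt_prod_of_nonempty hpos hfac ⟨0, Finset.mem_range.mpr hn⟩
    calc (s:ℝ) * ∏ i ∈ range n, ((m:ℝ) + n - 1 - i)
        = ∏ i ∈ range n, (r * ((m:ℝ) + n - 1 - i)) := by
          rw [Finset.prod_mul_distrib, Finset.prod_const, card_range, hrn]
      _ < _ := h
  have e1 : ∀ i ∈ range n, ((m + n - 1 - i : ℕ):ℝ) = (m:ℝ) + n - 1 - i := by
    intro i hi
    have hi' : i ≤ m + n - 1 := by have := Finset.mem_range.mp hi; omega
    rw [Nat.cast_sub hi', Nat.cast_sub (by omega : 1 ≤ m + n)]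
    push_cast; ring
  have e2 : ∀ i ∈ range n, ((δ + n - i : ℕ):ℝ) = (δ:ℝ) + n - i := by
    intro i hi
    rw [Nat.cast_sub (by have := Finset.mem_range.mp hi; omega : i ≤ δ + n)]
    push_cast; ring
  have hnat : s * ∏ i ∈ range n, (m + n - 1 - i) < ∏ i ∈ range n, (δ + n - i) := by
    have hR : ((s * ∏ i ∈ range n, (m + n - 1 - i) : ℕ):ℝ)
        < ((∏ i ∈ range n, (δ + n - i) : ℕ):ℝ) := by
      rw [Nat.cast_mul, Nat.cast_prod, Nat.cast_prod, Finset.prod_congr rfl e1,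
        Finset.prod_congr rfl e2]
      exact key
    exact_mod_cast hR
  refine ⟨hnat, ?_⟩
  have hd1 : (δ + n).descFactorial n = ∏ i ∈ range n, (δ + n - i) :=
    Nat.descFactorial_eq_prod_range _ _
  have hd2 : (m + n - 1).descFactorial n = ∏ i ∈ range n, (m + n - 1 - i) :=
    Nat.descFactorial_eq_prod_range _ _
  have h5 : Nat.factorial n * ((m + n - 1).choose n * s) < Nat.factorial n * (δ + n).choose n := by
    calc Nat.factorial n * ((m + n - 1).choose n * s) = s * (Nat.factorial n * (m + n - 1).choose n) := by ring
      _ = s * (m + n - 1).descFactorial n := by rw [Nat.descFactorial_eq_factorial_mul_choose]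
      _ = s * ∏ i ∈ range n, (m + n - 1 - i) := by rw [hd2]
      _ < ∏ i ∈ range n, (δ + n - i) := hnat
      _ = (δ + n).descFactorial n := hd1.symm
      _ = Nat.factorial n * (δ + n).choose n := Nat.descFactorial_eq_factorial_mul_choose _ _
  exact Nat.lt_of_mul_lt_mul_left h5
end

section
/- Let n ≥ 2, k ≥ 2, m ≥ 1 be integers and 0 < ε < 1 a real number with m ≤ (n-1)(k-2)/(2ε) + 1. Set A = k² - (k+ε)², B = (n-1)(k² - (1+2ε)k - ε²) + 2k, C = ((2k-1)(n-1)/2 + 1)² - ((k+ε)(n-1)/2)². Then Am² + Bm + C > 0. -/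
/-- Auxiliary positivity fact: a sum of visibly nonnegative pieces is positive. -/
lemma stmt_8_aux (u a b e : ℝ) (hu : 0 < u) (he : 0 < e) (ha : 0 ≤ a) (hb : 0 ≤ b) :
    0 < 9*e*u*(5+e) + 12*a*u*(1+2*e) + 6*a^2*u + 6*b*e*u*(5+e) + 4*b*a*u*(4+5*e)
      + 8*b*a^2*u + b^2*e*u*(5+e) + 4*b^2*a*u*(1+e) + 2*b^2*a^2*u := by
  have h1 : 0 < 9*e*u*(5+e) := by
    have := mul_pos he hu; nlinarith
  have h2 : 0 ≤ 12*a*u*(1+2*e) :=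
    mul_nonneg (mul_nonneg (by linarith) hu.le) (by linarith)
  have h3 : 0 ≤ 6*a^2*u := by positivity
  have h4 : 0 ≤ 6*b*e*u*(5+e) :=
    mul_nonneg (mul_nonneg (mul_nonneg (by linarith) he.le) hu.le) (by linarith)
  have h5 : 0 ≤ 4*b*a*u*(4+5*e) :=
    mul_nonneg (mul_nonneg (mul_nonneg (by linarith) ha) hu.le) (by linarith)
  have h6 : 0 ≤ 8*b*a^2*u := by positivity
  have h7 : 0 ≤ b^2*e*u*(5+e) :=
    mul_nonneg (mul_nonneg (mul_nonneg (by positivity) he.le) hu.le) (by linarith)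
  have h8 : 0 ≤ 4*b^2*a*u*(1+e) :=
    mul_nonneg (mul_nonneg (mul_nonneg (by positivity) ha) hu.le) (by linarith)
  have h9 : 0 ≤ 2*b^2*a^2*u := by positivity
  linarith

set_option maxHeartbeats 800000 in
/-- The key algebraic identity: the value of the quadratic at the right endpoint,
rescaled by `4ε²`, equals the positive combination. -/
lemma stmt_8_key (n k : ℕ) (ε : ℝ) (hε0 : 0 < ε) :
    4*ε^2*(((k : ℝ) ^ 2 - ((k : ℝ) + ε) ^ 2)*(((n : ℝ) - 1) * ((k : ℝ) - 2) / (2 * ε) + 1)^2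
      + (((n : ℝ) - 1) * ((k : ℝ) ^ 2 - (1 + 2 * ε) * (k : ℝ) - ε ^ 2) + 2 * (k : ℝ))
          * (((n : ℝ) - 1) * ((k : ℝ) - 2) / (2 * ε) + 1)
      + (((2 * (k : ℝ) - 1) * ((n : ℝ) - 1) / 2 + 1) ^ 2
          - (((k : ℝ) + ε) * ((n : ℝ) - 1) / 2) ^ 2)) =
      ε * (9*ε*(1-ε)*(5+ε) + 12*((k:ℝ)-2)*(1-ε)*(1+2*ε) + 6*((k:ℝ)-2)^2*(1-ε)
      + 6*((n:ℝ)-2)*ε*(1-ε)*(5+ε) + 4*((n:ℝ)-2)*((k:ℝ)-2)*(1-ε)*(4+5*ε)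
      + 8*((n:ℝ)-2)*((k:ℝ)-2)^2*(1-ε) + ((n:ℝ)-2)^2*ε*(1-ε)*(5+ε)
      + 4*((n:ℝ)-2)^2*((k:ℝ)-2)*(1-ε)*(1+ε) + 2*((n:ℝ)-2)^2*((k:ℝ)-2)^2*(1-ε)) := by
  have hεne : ε ≠ 0 := ne_of_gt hε0
  field_simp
  ring

set_option maxHeartbeats 1000000 in
/-- For `n ≥ 2`, `k ≥ 2`, `m ≥ 1` integers, `0 < ε < 1` with `m ≤ (n-1)(k-2)/(2ε) + 1`, the
quadratic `Am² + Bm + C` is positive, where `A = k² - (k+ε)²`,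
`B = (n-1)(k² - (1+2ε)k - ε²) + 2k`, `C = ((2k-1)(n-1)/2 + 1)² - ((k+ε)(n-1)/2)²`. -/
theorem stmt_8 (n k m : ℕ) (hn : 2 ≤ n) (hk : 2 ≤ k) (hm : 1 ≤ m)
    (ε : ℝ) (hε0 : 0 < ε) (hε1 : ε < 1)
    (hmle : (m : ℝ) ≤ ((n : ℝ) - 1) * ((k : ℝ) - 2) / (2 * ε) + 1) :
    let A : ℝ := (k : ℝ) ^ 2 - ((k : ℝ) + ε) ^ 2
    let B : ℝ := ((n : ℝ) - 1) * ((k : ℝ) ^ 2 - (1 + 2 * ε) * (k : ℝ) - ε ^ 2) + 2 * (k : ℝ)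
    let C : ℝ := ((2 * (k : ℝ) - 1) * ((n : ℝ) - 1) / 2 + 1) ^ 2
        - (((k : ℝ) + ε) * ((n : ℝ) - 1) / 2) ^ 2
    A * (m : ℝ) ^ 2 + B * (m : ℝ) + C > 0 := by
  show ((k : ℝ) ^ 2 - ((k : ℝ) + ε) ^ 2) * (m : ℝ) ^ 2
      + (((n : ℝ) - 1) * ((k : ℝ) ^ 2 - (1 + 2 * ε) * (k : ℝ) - ε ^ 2) + 2 * (k : ℝ)) * (m : ℝ)
      + (((2 * (k : ℝ) - 1) * ((n : ℝ) - 1) / 2 + 1) ^ 2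
          - (((k : ℝ) + ε) * ((n : ℝ) - 1) / 2) ^ 2) > 0
  set A : ℝ := (k : ℝ) ^ 2 - ((k : ℝ) + ε) ^ 2 with hAdef
  set B : ℝ := ((n : ℝ) - 1) * ((k : ℝ) ^ 2 - (1 + 2 * ε) * (k : ℝ) - ε ^ 2) + 2 * (k : ℝ)
    with hBdef
  set C : ℝ := ((2 * (k : ℝ) - 1) * ((n : ℝ) - 1) / 2 + 1) ^ 2
      - (((k : ℝ) + ε) * ((n : ℝ) - 1) / 2) ^ 2 with hCdef
  set M : ℝ := ((n : ℝ) - 1) * ((k : ℝ) - 2) / (2 * ε) + 1 with hMdef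
  have hn' : (2:ℝ) ≤ (n:ℝ) := by exact_mod_cast hn
  have hk' : (2:ℝ) ≤ (k:ℝ) := by exact_mod_cast hk
  have hm' : (1:ℝ) ≤ (m:ℝ) := by exact_mod_cast hm
  -- value at the right endpoint is positive
  have hP : 0 < 9*ε*(1-ε)*(5+ε) + 12*((k:ℝ)-2)*(1-ε)*(1+2*ε) + 6*((k:ℝ)-2)^2*(1-ε)
      + 6*((n:ℝ)-2)*ε*(1-ε)*(5+ε) + 4*((n:ℝ)-2)*((k:ℝ)-2)*(1-ε)*(4+5*ε)
      + 8*((n:ℝ)-2)*((k:ℝ)-2)^2*(1-ε) + ((n:ℝ)-2)^2*ε*(1-ε)*(5+ε)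
      + 4*((n:ℝ)-2)^2*((k:ℝ)-2)*(1-ε)*(1+ε) + 2*((n:ℝ)-2)^2*((k:ℝ)-2)^2*(1-ε) :=
    stmt_8_aux (1-ε) ((k:ℝ)-2) ((n:ℝ)-2) ε (by linarith) hε0 (by linarith) (by linarith)
  have key := stmt_8_key n k ε hε0
  rw [← hAdef, ← hBdef, ← hCdef, ← hMdef] at key
  have hfM : 0 < A*M^2 + B*M + C := by
    have h4 : (0:ℝ) < 4*ε^2 := by positivity
    have h5 : 0 < 4*ε^2*(A*M^2 + B*M + C) := key ▸ mul_pos hε0 hP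
    by_contra h
    push_neg at h
    have := mul_nonpos_of_nonneg_of_nonpos h4.le h
    linarith
  -- value at 0 is positive
  have hC : 0 < C := by
    have hXY : 0 < (((k:ℝ)-1-ε)*((n:ℝ)-1)/2 + 1) := by nlinarith
    have hXpY : 0 < ((3*(k:ℝ)-1+ε)*((n:ℝ)-1)/2 + 1) := by nlinarith
    have hfact : C = (((k:ℝ)-1-ε)*((n:ℝ)-1)/2 + 1) * ((3*(k:ℝ)-1+ε)*((n:ℝ)-1)/2 + 1) := by
      rw [hCdef]; ring
    rw [hfact]; exact mul_pos hXY hXpY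
  -- concavity: A < 0
  have hA : A < 0 := by rw [hAdef]; nlinarith
  have hMm : (m:ℝ) ≤ M := hmle
  have hM1 : (1:ℝ) ≤ M := le_trans hm' hMm
  have key2 : M * (A*(m:ℝ)^2 + B*(m:ℝ) + C) =
      (M - (m:ℝ))*C + (m:ℝ)*(A*M^2 + B*M + C) + (-A)*(m:ℝ)*M*(M - (m:ℝ)) := by ring
  have hRHS : 0 < (M - (m:ℝ))*C + (m:ℝ)*(A*M^2 + B*M + C) + (-A)*(m:ℝ)*M*(M - (m:ℝ)) := by
    have t1 : 0 ≤ (M - (m:ℝ))*C := mul_nonneg (by linarith) hC.le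
    have t2 : 0 < (m:ℝ)*(A*M^2 + B*M + C) := mul_pos (by linarith) hfM
    have t3 : 0 ≤ (-A)*(m:ℝ)*M*(M - (m:ℝ)) :=
      mul_nonneg (mul_nonneg (mul_nonneg (by linarith) (by linarith)) (by linarith))
        (by linarith)
    linarith
  have hMf : 0 < M * (A*(m:ℝ)^2 + B*(m:ℝ) + C) := key2 ▸ hRHS
  by_contra h
  push_neg at h
  have := mul_nonpos_of_nonneg_of_nonpos (by linarith : (0:ℝ) ≤ M) h
  linarith
end

section
/- Let n ≥ 2, k ≥ 2, m ≥ 1 be integers, let 0 ≤ ε < 1 be real, and suppose k - 2 ≥ (2ε/(n-1))·(m-1). Then for every integer i with 0 ≤ i ≤ ⌊(n-1)/2⌋, (k(m+n-1) + 1 - i)·(k(m+n-1) + 1 - (n-1) + i) > (k+ε)²·(m+n-1-i)·(m+i). -/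
/-- The factor-by-factor inequality: for `0 ≤ i ≤ ⌊(n-1)/2⌋`,
`(k(m+n-1)+1-i)(k(m+n-1)+1-(n-1)+i) > (k+ε)²(m+n-1-i)(m+i)`. -/
theorem stmt_10 (n k m : ℕ) (hn : 2 ≤ n) (hk : 2 ≤ k) (hm : 1 ≤ m)
    (ε : ℝ) (hε0 : 0 ≤ ε) (hε1 : ε < 1)
    (h : (k : ℝ) - 2 ≥ (2 * ε / ((n : ℝ) - 1)) * ((m : ℝ) - 1)) :
    ∀ i : ℕ, i ≤ (n - 1) / 2 →
      ((k : ℝ) * ((m : ℝ) + n - 1) + 1 - i) * ((k : ℝ) * ((m : ℝ) + n - 1) + 1 - ((n : ℝ) - 1) + i)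
        > ((k : ℝ) + ε) ^ 2 * ((m : ℝ) + n - 1 - i) * ((m : ℝ) + i) := by
  intro i hi
  have hn1 : (2:ℝ) ≤ (n:ℝ) := by exact_mod_cast hn
  have hk2 : (2:ℝ) ≤ (k:ℝ) := by exact_mod_cast hk
  have hm1 : (1:ℝ) ≤ (m:ℝ) := by exact_mod_cast hm
  have hi0 : (0:ℝ) ≤ (i:ℝ) := Nat.cast_nonneg i
  have hiN : 2 * i + 1 ≤ n := by omega
  have hi2 : 2 * (i:ℝ) + 1 ≤ (n:ℝ) := by exact_mod_cast hiN
  have hpos : (0:ℝ) < (n:ℝ) - 1 := by linarith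
  have hh : 2 * ε * ((m:ℝ) - 1) ≤ ((k:ℝ) - 2) * ((n:ℝ) - 1) := by
    have h' : (2 * ε / ((n:ℝ) - 1)) * ((m:ℝ) - 1) ≤ (k:ℝ) - 2 := h
    rw [div_mul_eq_mul_div, div_le_iff₀ hpos] at h'
    linarith
  -- A = k(m+n-1)+1-(n-1)/2, B = (k+ε)(m+(n-1)/2), t = (n-1)/2 - i
  have hAB : ((k:ℝ) + ε) * ((m:ℝ) + ((n:ℝ) - 1) / 2)
      < (k:ℝ) * ((m:ℝ) + ((n:ℝ) - 1)) + 1 - ((n:ℝ) - 1) / 2 := by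
    nlinarith [mul_nonneg (by linarith : (0:ℝ) ≤ 1 - ε) (by linarith : (0:ℝ) ≤ (n:ℝ) - 1 - 1)]
  have hBnn : 0 ≤ ((k:ℝ) + ε) * ((m:ℝ) + ((n:ℝ) - 1) / 2) :=
    mul_nonneg (by linarith) (by linarith)
  have hprod : 0 <
      ((k:ℝ) * ((m:ℝ) + ((n:ℝ) - 1)) + 1 - ((n:ℝ) - 1) / 2
        - ((k:ℝ) + ε) * ((m:ℝ) + ((n:ℝ) - 1) / 2))
      * ((k:ℝ) * ((m:ℝ) + ((n:ℝ) - 1)) + 1 - ((n:ℝ) - 1) / 2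
        + ((k:ℝ) + ε) * ((m:ℝ) + ((n:ℝ) - 1) / 2)) := by
    apply mul_pos <;> linarith
  have hsq : 0 ≤ (((k:ℝ) + ε) ^ 2 - 1) * (((n:ℝ) - 1) / 2 - (i:ℝ)) ^ 2 := by
    apply mul_nonneg
    · nlinarith
    · exact sq_nonneg _
  nlinarith [hprod, hsq]
end

section
/- Let n ≥ 2, m ≥ 1, s ≥ 2^n be integers, let k = ⌊s^{1/n}⌋ and let ε = s^{1/n} - k be the fractional part of s^{1/n}. If k - 2 ≥ (2ε/(n-1))·(m-1), then binom(k(m+n-1)+1, n) > binom(m+n-1, n)·s. -/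
open Finset

lemma pair_ineq (k e m i j : ℝ) (hk : 2 ≤ k) (he0 : 0 ≤ e) (he1 : e < 1)
    (hm : 1 ≤ m) (hi : 0 ≤ i) (hj : 0 ≤ j) (hij : 1 ≤ i + j)
    (hc : 2 * e * (m - 1) ≤ (i + j) * (k - 2)) :
    (k + e)^2 * ((m + j) * (m + i)) < (k * (m + i + j) + 1 - i) * (k * (m + i + j) + 1 - j) := by
  have ha : (0:ℝ) ≤ k - 2 := by linarith
  have hb : (0:ℝ) < 1 - e := by linarith
  have hb' : (0:ℝ) ≤ 1 - e := hb.le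
  have hu : (0:ℝ) ≤ m - 1 := by linarith
  have hh : (0:ℝ) ≤ i + j - 1 := by linarith
  have hc0 : (0:ℝ) ≤ (i + j) * (k - 2) - 2 * e * (m - 1) := by linarith
  have hd2 : (0:ℝ) ≤ (i - j)^2 := sq_nonneg _
  linarith [mul_nonneg ha hb',
    mul_nonneg (mul_nonneg (mul_nonneg ha hb') hb') hh,
    mul_nonneg (mul_nonneg (mul_nonneg ha hb') hb') hu,
    mul_nonneg (mul_nonneg (mul_nonneg ha hb') he0) hh,
    mul_nonneg (mul_nonneg (mul_nonneg ha hb') he0) hu,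
    mul_nonneg (mul_nonneg (mul_nonneg ha hb') hh) hh,
    mul_nonneg (mul_nonneg (mul_nonneg ha hb') hi) hj,
    mul_nonneg (mul_nonneg (mul_nonneg ha hb') hu) hh,
    hb,
    mul_nonneg (mul_nonneg (mul_nonneg hb' hb') hb') hh,
    mul_nonneg (mul_nonneg (mul_nonneg hb' hb') hb') hu,
    mul_nonneg (mul_nonneg (mul_nonneg hb' hb') he0) hh,
    mul_nonneg (mul_nonneg (mul_nonneg hb' hb') he0) hu,
    mul_nonneg (mul_nonneg (mul_nonneg hb' hb') hi) hj,
    mul_nonneg (mul_nonneg (mul_nonneg hb' hb') hu) hh,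
    mul_nonneg hb' he0,
    mul_nonneg (mul_nonneg (mul_nonneg hb' he0) he0) hh,
    mul_nonneg (mul_nonneg (mul_nonneg hb' he0) he0) hu,
    mul_nonneg (mul_nonneg (mul_nonneg hb' he0) hi) hj,
    hc0,
    mul_nonneg hc0 ha,
    mul_nonneg (mul_nonneg hc0 ha) hh,
    mul_nonneg (mul_nonneg hc0 ha) hu,
    mul_nonneg (mul_nonneg hc0 hb') hu,
    mul_nonneg (mul_nonneg hc0 he0) hh,
    mul_nonneg (mul_nonneg hc0 he0) hu,
    hd2,
    mul_nonneg hd2 ha,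
    mul_nonneg (mul_nonneg hd2 ha) ha]

lemma sq_prod (f : ℕ → ℝ) (n : ℕ) :
    ∏ i ∈ Finset.range n, (f i * f (n - 1 - i)) = (∏ i ∈ Finset.range n, f i) ^ 2 := by
  rw [Finset.prod_mul_distrib, Finset.prod_range_reflect, sq]

lemma descFac_cast (N n : ℕ) (h : n ≤ N) :
    (N.descFactorial n : ℝ) = ∏ i ∈ range n, ((N : ℝ) - i) := by
  rw [Nat.descFactorial_eq_prod_range, Nat.cast_prod]
  refine Finset.prod_congr rfl fun i hi => ?_
  have : i ≤ N := le_trans (le_of_lt (mem_range.mp hi)) h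
  push_cast [Nat.cast_sub this]
  ring


/-- For `n ≥ 2`, `m ≥ 1`, `s ≥ 2^n`, with `k = ⌊s^{1/n}⌋` and `ε = s^{1/n} - k`, if
`k - 2 ≥ (2ε/(n-1))(m-1)` then `binom(k(m+n-1)+1, n) > binom(m+n-1, n)·s`. -/
theorem stmt_11 (n m s : ℕ) (hn : 2 ≤ n) (hm : 1 ≤ m) (hs : 2 ^ n ≤ s) :
    let k : ℕ := ⌊(s : ℝ) ^ ((n : ℝ)⁻¹)⌋₊
    let ε : ℝ := (s : ℝ) ^ ((n : ℝ)⁻¹) - k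
    (k : ℝ) - 2 ≥ (2 * ε / ((n : ℝ) - 1)) * ((m : ℝ) - 1) →
      (k * (m + n - 1) + 1).choose n > (m + n - 1).choose n * s := by
  intro k ε hyp
  set r : ℝ := (s : ℝ) ^ ((n : ℝ)⁻¹) with hr
  have hs0 : (0:ℝ) ≤ (s:ℝ) := Nat.cast_nonneg s
  have hr0 : 0 ≤ r := Real.rpow_nonneg hs0 _
  have hr2 : (2:ℝ) ≤ r := by
    have h2 : ((2:ℝ) ^ (n:ℕ)) ^ ((n:ℝ)⁻¹) ≤ (s:ℝ) ^ ((n:ℝ)⁻¹) := by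
      apply Real.rpow_le_rpow (by positivity) ?_ (by positivity)
      exact_mod_cast hs
    calc (2:ℝ) = ((2:ℝ) ^ (n:ℕ)) ^ ((n:ℝ)⁻¹) := by
          rw [← Real.rpow_natCast 2 n, ← Real.rpow_mul (by norm_num),
            mul_inv_cancel₀ (by positivity), Real.rpow_one]
      _ ≤ r := h2
  have hk2 : 2 ≤ k := Nat.le_floor (by exact_mod_cast hr2)
  have hke : (k:ℝ) + ε = r := by simp [ε, hr]
  have he0 : 0 ≤ ε := sub_nonneg.mpr (Nat.floor_le hr0)
  have he1 : ε < 1 := by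
    have := Nat.lt_floor_add_one r
    simp only [ε]; linarith
  have hrn : r ^ n = (s:ℝ) := Real.rpow_inv_natCast_pow hs0 (by omega)
  -- M and basic bounds
  set M : ℕ := m + n - 1 with hM
  have hMn : n ≤ M := by omega
  have hMc : (M:ℝ) = (m:ℝ) + (n:ℝ) - 1 := by
    have : M = m + (n - 1) := by omega
    rw [this]; push_cast [Nat.cast_sub (by omega : 1 ≤ n)]; ring
  have hn1 : (0:ℝ) < (n:ℝ) - 1 := by
    have : (2:ℝ) ≤ (n:ℝ) := by exact_mod_cast hn
    linarith
  have hc : 2 * ε * ((m:ℝ) - 1) ≤ ((n:ℝ) - 1) * ((k:ℝ) - 2) := by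
    have h := mul_le_mul_of_nonneg_right hyp hn1.le
    calc 2 * ε * ((m:ℝ) - 1) = 2 * ε / ((n:ℝ) - 1) * ((m:ℝ) - 1) * ((n:ℝ) - 1) := by
          field_simp
      _ ≤ ((k:ℝ) - 2) * ((n:ℝ) - 1) := h
      _ = ((n:ℝ) - 1) * ((k:ℝ) - 2) := by ring
  -- real-valued factor functions
  set X : ℕ := k * M + 1 with hX
  have hXn : n ≤ X := by nlinarith [hk2, hMn, hn]
  set a : ℕ → ℝ := fun i => (X:ℝ) - i with ha
  set b : ℕ → ℝ := fun i => ((M:ℝ) - i) * r with hb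
  have hXc : (X:ℝ) = (k:ℝ) * (M:ℝ) + 1 := by push_cast [hX]; ring
  have hbpos : ∀ i ∈ range n, 0 < b i := by
    intro i hi
    have hi' : i < n := mem_range.mp hi
    have : (i:ℝ) ≤ (n:ℝ) - 1 := by
      have : (i:ℝ) + 1 ≤ (n:ℝ) := by exact_mod_cast hi'
      linarith
    have hMi : (0:ℝ) < (M:ℝ) - i := by
      have : (n:ℝ) ≤ (M:ℝ) := by exact_mod_cast hMn
      linarith
    exact mul_pos hMi (by linarith)
  -- pairwise inequality
  have key : ∀ i ∈ range n, b i * b (n - 1 - i) < a i * a (n - 1 - i) := by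
    intro i hi
    have hi' : i < n := mem_range.mp hi
    have hin : i ≤ n - 1 := by omega
    have hjc : ((n - 1 - i : ℕ) : ℝ) = (n:ℝ) - 1 - i := by
      have h1 : ((n - 1 - i : ℕ) : ℝ) = ((n-1:ℕ):ℝ) - (i:ℕ) := Nat.cast_sub hin
      have h2 : ((n-1:ℕ):ℝ) = (n:ℝ) - 1 := by
        exact_mod_cast Nat.cast_sub (by omega : 1 ≤ n)
      rw [h1, h2]
    have hij1 : (1:ℝ) ≤ (i:ℝ) + ((n:ℝ) - 1 - i) := by
      have : (2:ℝ) ≤ (n:ℝ) := by exact_mod_cast hn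
      linarith
    have hj0 : (0:ℝ) ≤ (n:ℝ) - 1 - i := by
      have : (i:ℝ) ≤ (n:ℝ) - 1 := by
        have : ((i:ℕ):ℝ) ≤ ((n-1:ℕ):ℝ) := by exact_mod_cast hin
        calc (i:ℝ) ≤ ((n-1:ℕ):ℝ) := this
          _ = (n:ℝ) - 1 := by exact_mod_cast Nat.cast_sub (by omega : 1 ≤ n)
      linarith
    have hm1 : (1:ℝ) ≤ (m:ℝ) := by exact_mod_cast hm
    have hk2' : (2:ℝ) ≤ (k:ℝ) := by exact_mod_cast hk2
    have hc' : 2 * ε * ((m:ℝ) - 1) ≤ ((i:ℝ) + ((n:ℝ) - 1 - i)) * ((k:ℝ) - 2) := by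
      calc 2 * ε * ((m:ℝ) - 1) ≤ ((n:ℝ) - 1) * ((k:ℝ) - 2) := hc
        _ = ((i:ℝ) + ((n:ℝ) - 1 - i)) * ((k:ℝ) - 2) := by ring
    have hp := pair_ineq (k:ℝ) ε (m:ℝ) (i:ℝ) ((n:ℝ) - 1 - i) hk2' he0 he1 hm1
      (Nat.cast_nonneg i) hj0 hij1 hc'
    calc b i * b (n - 1 - i)
        = (((M:ℝ) - i) * r) * (((M:ℝ) - ((n:ℝ) - 1 - i)) * r) := by
          simp only [hb, hjc]
      _ = ((k:ℝ) + ε)^2 * (((m:ℝ) + ((n:ℝ) - 1 - i)) * ((m:ℝ) + i)) := by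
          rw [← hke]; rw [hMc]; ring
      _ < ((k:ℝ) * ((m:ℝ) + i + ((n:ℝ) - 1 - i)) + 1 - i) *
            ((k:ℝ) * ((m:ℝ) + i + ((n:ℝ) - 1 - i)) + 1 - ((n:ℝ) - 1 - i)) := hp
      _ = a i * a (n - 1 - i) := by
          simp only [ha, hjc, hXc, hMc]; ring
  -- products
  have hprod : ∏ i ∈ range n, b i < ∏ i ∈ range n, a i := by
    have hne : (range n).Nonempty := nonempty_range_iff.mpr (by omega)
    have hsq : (∏ i ∈ range n, b i) ^ 2 < (∏ i ∈ range n, a i) ^ 2 := by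
      rw [← sq_prod b n, ← sq_prod a n]
      refine Finset.prod_lt_prod_of_nonempty ?_ key hne
      intro i hi
      have hi' : i < n := mem_range.mp hi
      have : n - 1 - i ∈ range n := mem_range.mpr (by omega)
      exact mul_pos (hbpos i hi) (hbpos _ this)
    have hap : 0 ≤ ∏ i ∈ range n, a i := by
      refine Finset.prod_nonneg fun i hi => ?_
      have hi' : i < n := mem_range.mp hi
      have : (i:ℝ) < (X:ℝ) := by exact_mod_cast lt_of_lt_of_le hi' hXn
      simp only [ha]; linarith
    exact lt_of_pow_lt_pow_left₀ 2 hap hsq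
  -- convert to descFactorial
  have hda : (X.descFactorial n : ℝ) = ∏ i ∈ range n, a i := descFac_cast X n hXn
  have hdb : ((M.descFactorial n : ℝ)) * (s:ℝ) = ∏ i ∈ range n, b i := by
    rw [descFac_cast M n hMn, hb, prod_mul_distrib, prod_const, card_range, hrn]
  have hreal : (M.descFactorial n * s : ℕ) < (X.descFactorial n : ℕ) := by
    have : ((M.descFactorial n * s : ℕ) : ℝ) < ((X.descFactorial n : ℕ) : ℝ) := by
      push_cast
      rw [hdb, hda]  -- careful push_cast already
      exact hprod
    exact_mod_cast this
  -- descFactorial = n! * choose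
  rw [Nat.descFactorial_eq_factorial_mul_choose X n,
    Nat.descFactorial_eq_factorial_mul_choose M n] at hreal
  have h' : n.factorial * (M.choose n * s) < n.factorial * X.choose n := by
    rw [← Nat.mul_assoc]; exact hreal
  exact Nat.lt_of_mul_lt_mul_left h'
end

section
/- Let n ≥ 2, m ≥ 1, s ≥ 2^n be integers, k = ⌊s^{1/n}⌋, ε = s^{1/n} - k, and suppose k - 2 ≥ (2ε/(n-1))·(m-1). Then the product over i = 0,…,⌊(n-1)/2⌋ of the pairwise inequalities yields (k(m+n-1)+1)·(k(m+n-1))⋯(k(m+n-1)+1-(n-1)) > (m+n-1)(m+n-2)⋯m·(k+ε)^n. -/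
set_option maxHeartbeats 2000000 in
/-- Under the hypothesis `k - 2 ≥ (2ε/(n-1))(m-1)`, the falling-factorial inequality
`(k(m+n-1)+1)·(k(m+n-1))⋯(k(m+n-1)+1-(n-1)) > (m+n-1)(m+n-2)⋯m·(k+ε)^n` holds,
where `k = ⌊s^{1/n}⌋` and `ε = s^{1/n} - k`. -/
theorem stmt_12 (n m s : ℕ) (hn : 2 ≤ n) (hm : 1 ≤ m) (hs : 2 ^ n ≤ s) :
    let k : ℕ := ⌊(s : ℝ) ^ ((n : ℝ)⁻¹)⌋₊
    let ε : ℝ := (s : ℝ) ^ ((n : ℝ)⁻¹) - k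
    (k : ℝ) - 2 ≥ (2 * ε / ((n : ℝ) - 1)) * ((m : ℝ) - 1) →
      (∏ i ∈ Finset.range n, ((k : ℝ) * ((m : ℝ) + n - 1) + 1 - i))
        > (∏ i ∈ Finset.range n, ((m : ℝ) + n - 1 - i)) * ((k : ℝ) + ε) ^ n := by
  intro k ε h
  have hn2 : (2:ℝ) ≤ (n:ℝ) := by exact_mod_cast hn
  have hm1 : (1:ℝ) ≤ (m:ℝ) := by exact_mod_cast hm
  have hx2 : (2:ℝ) ≤ (s : ℝ) ^ ((n : ℝ)⁻¹) := by
    have h1 : ((2:ℝ) ^ (n:ℕ)) ^ ((n : ℝ)⁻¹) ≤ (s : ℝ) ^ ((n : ℝ)⁻¹) :=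
      Real.rpow_le_rpow (by positivity) (by exact_mod_cast hs) (by positivity)
    calc (2:ℝ) = ((2:ℝ) ^ (n:ℕ)) ^ ((n : ℝ)⁻¹) := by
          rw [← Real.rpow_natCast 2 n, ← Real.rpow_mul (by norm_num),
            mul_inv_cancel₀ (by positivity : (n:ℝ) ≠ 0), Real.rpow_one]
      _ ≤ _ := h1
  have hk2 : 2 ≤ k := Nat.le_floor (by exact_mod_cast hx2)
  have hK2 : (2:ℝ) ≤ (k:ℝ) := by exact_mod_cast hk2
  have hε0 : 0 ≤ ε := sub_nonneg.mpr (Nat.floor_le (by positivity))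
  have hε1 : ε < 1 := by
    have h1 := Nat.lt_floor_add_one ((s:ℝ) ^ ((n:ℝ)⁻¹))
    have h2 : (s:ℝ) ^ ((n:ℝ)⁻¹) < (k:ℝ) + 1 := by exact_mod_cast h1
    show (s:ℝ) ^ ((n:ℝ)⁻¹) - (k:ℝ) < 1
    linarith
  have hkey : 2 * ε * ((m:ℝ) - 1) ≤ ((k:ℝ) - 2) * ((n:ℝ) - 1) := by
    rw [ge_iff_le, div_mul_eq_mul_div, div_le_iff₀ (by linarith : (0:ℝ) < (n:ℝ)-1)] at h
    linarith
  -- abbreviations (kept as raw expressions)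
  -- X := k + ε ≥ 2, B := m + n - 1 ≥ n
  clear_value k ε
  have hX2 : (2:ℝ) ≤ (k:ℝ) + ε := by linarith
  -- key constants
  have hSb0 : 0 < (2 * ((m:ℝ) + n - 1) - ((n:ℝ) - 1)) * ((k:ℝ) + ε) := by nlinarith
  have hC : (2 * ((m:ℝ) + n - 1) - ((n:ℝ) - 1)) * ((k:ℝ) + ε)
      < 2 * ((k:ℝ) * ((m:ℝ) + n - 1) + 1) - ((n:ℝ) - 1) := by
    nlinarith [hkey, mul_pos (show (0:ℝ) < (n:ℝ)+1 by linarith)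
      (show (0:ℝ) < 1 - ε by linarith)]
  have hsq : ((2 * ((m:ℝ) + n - 1) - ((n:ℝ) - 1)) * ((k:ℝ) + ε)) ^ 2
      < (2 * ((k:ℝ) * ((m:ℝ) + n - 1) + 1) - ((n:ℝ) - 1)) ^ 2 := by
    nlinarith [hSb0, hC]
  set a : ℕ → ℝ := fun i => (k:ℝ) * ((m:ℝ) + n - 1) + 1 - i with ha_def
  set b : ℕ → ℝ := fun i => ((m:ℝ) + n - 1 - i) * ((k:ℝ) + ε) with hb_def
  have ha_pos : ∀ i ∈ Finset.range n, 0 < a i := by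
    intro i hi
    rw [Finset.mem_range] at hi
    have hi' : (i:ℝ) ≤ (n:ℝ) - 1 := by
      have : i ≤ n - 1 := by omega
      have h2 : ((i:ℝ)) ≤ ((n-1 : ℕ):ℝ) := by exact_mod_cast this
      have h3 : ((n-1:ℕ):ℝ) = (n:ℝ) - 1 := by
        have : 1 ≤ n := by omega
        push_cast [this]; ring
      linarith [h3 ▸ h2]
    simp only [ha_def]
    nlinarith
  have hb_pos : ∀ i ∈ Finset.range n, 0 < b i := by
    intro i hi
    rw [Finset.mem_range] at hi
    have hi' : (i:ℝ) ≤ (n:ℝ) - 1 := by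
      have : i ≤ n - 1 := by omega
      have h2 : ((i:ℝ)) ≤ ((n-1 : ℕ):ℝ) := by exact_mod_cast this
      have h3 : ((n-1:ℕ):ℝ) = (n:ℝ) - 1 := by
        have : 1 ≤ n := by omega
        push_cast [this]; ring
      linarith [h3 ▸ h2]
    simp only [hb_def]
    nlinarith
  have hterm : ∀ i ∈ Finset.range n, b i * b (n - 1 - i) < a i * a (n - 1 - i) := by
    intro i hi
    rw [Finset.mem_range] at hi
    have hcast : ((n - 1 - i : ℕ) : ℝ) = (n:ℝ) - 1 - i := by
      have h1 : i ≤ n - 1 := by omega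
      have h2 : 1 ≤ n := by omega
      rw [Nat.cast_sub h1, Nat.cast_sub h2]
      push_cast; ring
    have hdl : ((n:ℝ) - 1 - 2*i)^2 ≤ ((n:ℝ) - 1 - 2*i)^2 * ((k:ℝ) + ε)^2 := by
      nlinarith [mul_nonneg (mul_nonneg (sq_nonneg ((n:ℝ) - 1 - 2*(i:ℝ)))
        (show (0:ℝ) ≤ (k:ℝ) + ε - 1 by linarith)) (show (0:ℝ) ≤ (k:ℝ) + ε + 1 by linarith)]
    have e1 : ((k:ℝ) * ((m:ℝ) + n - 1) + 1 - ((n:ℝ) - 1 - i)) * ((k:ℝ) * ((m:ℝ) + n - 1) + 1 - i)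
        = ((2 * ((k:ℝ) * ((m:ℝ) + n - 1) + 1) - ((n:ℝ) - 1)) ^ 2 - ((n:ℝ) - 1 - 2*i) ^ 2) / 4 := by
      ring
    have e2 : (((m:ℝ) + n - 1 - ((n:ℝ) - 1 - i)) * ((k:ℝ) + ε)) * (((m:ℝ) + n - 1 - i) * ((k:ℝ) + ε))
        = (((2 * ((m:ℝ) + n - 1) - ((n:ℝ) - 1)) * ((k:ℝ) + ε)) ^ 2
          - ((n:ℝ) - 1 - 2*i) ^ 2 * ((k:ℝ) + ε) ^ 2) / 4 := by
      ring
    simp only [ha_def, hb_def, hcast]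
    rw [mul_comm (((m:ℝ) + n - 1 - ((n:ℝ) - 1 - i)) * ((k:ℝ) + ε))] at e2
    rw [mul_comm (((k:ℝ) * ((m:ℝ) + n - 1) + 1 - ((n:ℝ) - 1 - i)))] at e1
    rw [e1, e2]
    nlinarith [hsq, hdl]
  have hPb : 0 < ∏ i ∈ Finset.range n, b i := Finset.prod_pos hb_pos
  have hPa : 0 < ∏ i ∈ Finset.range n, a i := Finset.prod_pos ha_pos
  have hsqprod : (∏ i ∈ Finset.range n, b i) ^ 2 < (∏ i ∈ Finset.range n, a i) ^ 2 := by
    have eb : (∏ i ∈ Finset.range n, b i) ^ 2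
        = ∏ i ∈ Finset.range n, (b i * b (n - 1 - i)) :=
      calc (∏ i ∈ Finset.range n, b i) ^ 2
          = (∏ i ∈ Finset.range n, b i) * (∏ i ∈ Finset.range n, b (n - 1 - i)) := by
            rw [Finset.prod_range_reflect b n, sq]
        _ = ∏ i ∈ Finset.range n, (b i * b (n - 1 - i)) := Finset.prod_mul_distrib.symm
    have ea : (∏ i ∈ Finset.range n, a i) ^ 2
        = ∏ i ∈ Finset.range n, (a i * a (n - 1 - i)) :=
      calc (∏ i ∈ Finset.range n, a i) ^ 2
          = (∏ i ∈ Finset.range n, a i) * (∏ i ∈ Finset.range n, a (n - 1 - i)) := by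
            rw [Finset.prod_range_reflect a n, sq]
        _ = ∏ i ∈ Finset.range n, (a i * a (n - 1 - i)) := Finset.prod_mul_distrib.symm
    rw [eb, ea]
    refine Finset.prod_lt_prod_of_nonempty ?_ hterm ?_
    · intro i hi
      exact mul_pos (hb_pos i hi) (hb_pos (n-1-i) (by simp only [Finset.mem_range]; omega))
    · exact ⟨0, by simp only [Finset.mem_range]; omega⟩
  have hfin : (∏ i ∈ Finset.range n, b i) < ∏ i ∈ Finset.range n, a i :=
    lt_of_pow_lt_pow_left₀ 2 hPa.le hsqprod
  have hb_split : ∏ i ∈ Finset.range n, b i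
      = (∏ i ∈ Finset.range n, ((m:ℝ) + n - 1 - i)) * ((k:ℝ) + ε) ^ n := by
    simp only [hb_def]
    rw [Finset.prod_mul_distrib, Finset.prod_const, Finset.card_range]
  rw [hb_split] at hfin
  exact hfin
end

section
/- Let n ≥ 2, m ≥ 1 be integers and let s be a positive integer such that s^{1/n} is an integer k ≥ 2 (i.e., s = k^n). Then binom(k(m+n-1)+1, n) > binom(m+n-1, n)·k^n. -/
/-- For `n ≥ 2`, `m ≥ 1`, and `s = k^n` with `k ≥ 2` an integer,
`binom(k(m+n-1)+1, n) > binom(m+n-1, n)·s`. -/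
theorem stmt_15 (n m k s : ℕ) (hn : 2 ≤ n) (hm : 1 ≤ m) (hk : 2 ≤ k) (hs : s = k ^ n) :
    (k * (m + n - 1) + 1).choose n > (m + n - 1).choose n * s := by
  subst hs
  set M := m + n - 1 with hM
  have hMn : n ≤ M := by omega
  have key : M.descFactorial n * k ^ n < (k * M + 1).descFactorial n := by
    rw [Nat.descFactorial_eq_prod_range, Nat.descFactorial_eq_prod_range]
    have : (∏ i ∈ Finset.range n, (M - i)) * k ^ n
        = ∏ i ∈ Finset.range n, (M - i) * k := by
      rw [Finset.prod_mul_distrib, Finset.prod_const, Finset.card_range]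
    rw [this]
    apply Finset.prod_lt_prod_of_nonempty
    · intro i hi
      simp only [Finset.mem_range] at hi
      exact Nat.mul_pos (by omega) (by omega)
    · intro i hi
      simp only [Finset.mem_range] at hi
      have hiM : i ≤ M := le_of_lt (lt_of_lt_of_le hi hMn)
      have e1 : (M - i) * k = M * k - i * k := Nat.sub_mul M i k
      have e2 : M * k = k * M := Nat.mul_comm M k
      have e3 : i * k = k * i := Nat.mul_comm i k
      have hki : 2 * i ≤ k * i := Nat.mul_le_mul_right i hk
      have hkiM : k * i ≤ k * M := Nat.mul_le_mul_left k hiM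
      omega
    · exact ⟨0, Finset.mem_range.mpr (by omega)⟩
  have h1 := Nat.descFactorial_eq_factorial_mul_choose (k * M + 1) n
  have h2 := Nat.descFactorial_eq_factorial_mul_choose M n
  rw [h1, h2] at key
  have hf : 0 < n.factorial := Nat.factorial_pos n
  have : n.factorial * (M.choose n * k ^ n) < n.factorial * (k * M + 1).choose n := by
    calc n.factorial * (M.choose n * k ^ n) = n.factorial * M.choose n * k ^ n := by ring
      _ < n.factorial * (k * M + 1).choose n := key
  exact lt_of_mul_lt_mul_left this (Nat.zero_le _)
end
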